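/- Let p be a prime not dividing n, with n divisible by p - 1 being irrelevant: if g is an element of finite order in the group F_i S_n = {x ∈ O_n^× : x ≡ 1 mod S^{ni}} with i > 1/(p-1), then g = 1. -/

import Mathlib

open Matrix

variable (p n : ℕ) [Fact p.Prime]

/-- The matrix of right multiplication by `S` on `O_n = W(F_{p^n})⟨S⟩/(S^n = p, Sw = σ(w)S)`,
viewed as a free left `W(F_{p^n})`-module with basis `1, S, …, S^{n-1}`. -/
noncomputable def sMat : Matrix (Fin n) (Fin n) (WittVector p (GaloisField p n)) :=
  Matrix.of fun i j =>
    if (j : ℕ) = (i : ℕ) + 1 then 1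
    else if (i : ℕ) = n - 1 ∧ (j : ℕ) = 0 then (p : WittVector p (GaloisField p n)) else 0

/-- The (twisted diagonal) matrix of right multiplication by `w ∈ W(F_{p^n})` on `O_n`. -/
noncomputable def wDiag (w : WittVector p (GaloisField p n)) :
    Matrix (Fin n) (Fin n) (WittVector p (GaloisField p n)) :=
  Matrix.diagonal fun i => (fun x => WittVector.frobenius x)^[(i : ℕ)] w

/-- The ring `O_n = W(F_{p^n})⟨S⟩/(S^n = p, Sw = σ(w)S)`, realized as the subring of
`n × n` matrices over `W(F_{p^n})` generated by `S` and the (twisted diagonal) copies of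
`W(F_{p^n})`. -/
noncomputable def Oring : Subring (Matrix (Fin n) (Fin n) (WittVector p (GaloisField p n))) :=
  Subring.closure ({sMat p n} ∪ Set.range (wDiag p n))

section Aux

variable {p n}
local notation "R" => WittVector p (GaloisField p n)
local notation "M" => Matrix (Fin n) (Fin n) (WittVector p (GaloisField p n))

lemma frob_iter_coeff (w : R) (m i : ℕ) :
    ((fun x : R => WittVector.frobenius x)^[m] w).coeff i = w.coeff i ^ p ^ m := by
  induction m with
  | zero => simp
  | succ m ih =>
    rw [Function.iterate_succ_apply', WittVector.coeff_frobenius_charP, ih, ← pow_mul, pow_succ]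

lemma gf_pow_card (hn : n ≠ 0) (x : GaloisField p n) : x ^ p ^ n = x := by
  have : Fintype (GaloisField p n) := Fintype.ofFinite _
  rw [← Nat.card_eq_fintype_card.symm.trans (GaloisField.card p n hn)]
  simpa [Nat.card_eq_fintype_card] using FiniteField.pow_card x

lemma frob_iter_n (hn : n ≠ 0) (w : R) :
    (fun x : R => WittVector.frobenius x)^[n] w = w := by
  ext i; rw [frob_iter_coeff, gf_pow_card hn]

lemma mul_sMat_apply (hn : n ≠ 0) (A : M) (i l : Fin n) :
    (A * sMat p n) i l =
      if (l : ℕ) = 0 then (p : R) * A i ⟨n - 1, by omega⟩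
      else A i ⟨(l : ℕ) - 1, by omega⟩ := by
  rw [Matrix.mul_apply]
  split_ifs with hl
  · rw [Finset.sum_eq_single (⟨n - 1, by omega⟩ : Fin n)]
    · simp only [sMat, Matrix.of_apply, Fin.val_mk]
      rw [if_neg (by omega), if_pos ⟨trivial, hl⟩]
      ring
    · intro t _ ht
      simp only [sMat, Matrix.of_apply, hl]
      rw [if_neg (by omega), if_neg (by
        rintro ⟨h1, -⟩
        exact ht (Fin.ext h1))]
      exact mul_zero _
    · intro h; exact absurd (Finset.mem_univ _) h
  · rw [Finset.sum_eq_single (⟨(l : ℕ) - 1, by omega⟩ : Fin n)]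
    · simp only [sMat, Matrix.of_apply, Fin.val_mk]
      rw [if_pos (by omega)]
      exact mul_one _
    · intro t _ ht
      simp only [sMat, Matrix.of_apply]
      rw [if_neg (fun h => ht (Fin.ext (show (t : ℕ) = (l : ℕ) - 1 by omega))),
        if_neg (by rintro ⟨-, h⟩; exact hl h)]
      exact mul_zero _
    · intro h; exact absurd (Finset.mem_univ _) h

lemma sMat_pow (hn : n ≠ 0) (j : ℕ) (hj : j ≤ n) :
    sMat p n ^ j = Matrix.of (fun i l : Fin n =>
      if (l : ℕ) = (i : ℕ) + j then (1 : R)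
      else if (l : ℕ) + n = (i : ℕ) + j then (p : R) else 0) := by
  induction j with
  | zero =>
    funext i l
    simp only [pow_zero, Matrix.one_apply, Matrix.of_apply, Nat.add_zero, Fin.ext_iff]
    have hl := l.isLt
    rcases eq_or_ne (i : ℕ) (l : ℕ) with h | h
    · rw [if_pos h, if_pos h.symm]
    · rw [if_neg h, if_neg (Ne.symm h), if_neg (by omega)]
  | succ j ih =>
    rw [pow_succ, ih (by omega)]
    funext i l
    rw [mul_sMat_apply hn]
    have hi := i.isLt
    have hl := l.isLt
    have hjn : j + 1 ≤ n := hj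
    by_cases h0 : (l : ℕ) = 0
    · rw [if_pos h0]
      simp only [Matrix.of_apply, Fin.val_mk]
      rcases eq_or_ne (n - 1) ((i : ℕ) + j) with h | h
      · rw [if_pos h, if_neg (show ¬((l : ℕ) = (i : ℕ) + (j + 1)) by omega),
          if_pos (show (l : ℕ) + n = (i : ℕ) + (j + 1) by omega), mul_one]
      · rw [if_neg h, if_neg (show ¬(n - 1 + n = (i : ℕ) + j) by omega),
          if_neg (show ¬((l : ℕ) = (i : ℕ) + (j + 1)) by omega),
          if_neg (show ¬((l : ℕ) + n = (i : ℕ) + (j + 1)) by omega), mul_zero]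
    · rw [if_neg h0]
      simp only [Matrix.of_apply, Fin.val_mk]
      rcases eq_or_ne ((l : ℕ) - 1) ((i : ℕ) + j) with h | h
      · rw [if_pos h, if_pos (show (l : ℕ) = (i : ℕ) + (j + 1) by omega)]
      · rcases eq_or_ne ((l : ℕ) - 1 + n) ((i : ℕ) + j) with h2 | h2
        · rw [if_neg h, if_pos h2, if_neg (show ¬((l : ℕ) = (i : ℕ) + (j + 1)) by omega),
            if_pos (show (l : ℕ) + n = (i : ℕ) + (j + 1) by omega)]
        · rw [if_neg h, if_neg h2, if_neg (show ¬((l : ℕ) = (i : ℕ) + (j + 1)) by omega),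
            if_neg (show ¬((l : ℕ) + n = (i : ℕ) + (j + 1)) by omega)]

lemma sMat_pow_n (hn : n ≠ 0) : sMat p n ^ n = (p : R) • (1 : M) := by
  rw [sMat_pow hn n le_rfl]
  funext i l
  have hi := i.isLt
  have hl := l.isLt
  simp only [Matrix.of_apply, Matrix.smul_apply, Matrix.one_apply, smul_eq_mul]
  rcases eq_or_ne (i : ℕ) (l : ℕ) with h | h
  · rw [if_neg (by omega), if_pos (by omega), if_pos (Fin.ext h), mul_one]
  · rw [if_neg (by omega), if_neg (by omega),
      if_neg (fun hc => h (congrArg Fin.val hc)), mul_zero]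

lemma sMat_mul_wDiag (hn : n ≠ 0) (w : R) :
    sMat p n * wDiag p n w = wDiag p n (WittVector.frobenius w) * sMat p n := by
  funext i l
  rw [wDiag, wDiag, Matrix.mul_diagonal, Matrix.diagonal_mul]
  simp only [sMat, Matrix.of_apply]
  split_ifs with h1 h2
  · rw [one_mul, mul_one, h1, Function.iterate_succ_apply]
  · obtain ⟨hi1, hl0⟩ := h2
    have h3 : (fun x : R => WittVector.frobenius x)^[n - 1] (WittVector.frobenius w)
        = (fun x : R => WittVector.frobenius x)^[n - 1 + 1] w :=
      (Function.iterate_succ_apply _ _ _).symm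
    rw [hl0, hi1, Function.iterate_zero_apply, h3, (show n - 1 + 1 = n by omega),
      frob_iter_n hn, mul_comm]
  · rw [zero_mul, mul_zero]

lemma wDiag_mul_sMat (hn : n ≠ 0) (w : R) :
    wDiag p n w * sMat p n
      = sMat p n * wDiag p n ((fun x : R => WittVector.frobenius x)^[n - 1] w) := by
  rw [sMat_mul_wDiag hn]
  have h3 : WittVector.frobenius ((fun x : R => WittVector.frobenius x)^[n - 1] w)
      = (fun x : R => WittVector.frobenius x)^[n - 1 + 1] w :=
    (Function.iterate_succ_apply' _ _ _).symm
  rw [h3, (show n - 1 + 1 = n by omega), frob_iter_n hn]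

lemma sMat_mem : sMat p n ∈ Oring p n :=
  Subring.subset_closure (Or.inl rfl)

lemma wDiag_mem (w : R) : wDiag p n w ∈ Oring p n :=
  Subring.subset_closure (Or.inr ⟨w, rfl⟩)

lemma mul_sMat_comm (hn : n ≠ 0) {x : M} (hx : x ∈ Oring p n) :
    ∃ y ∈ Oring p n, x * sMat p n = sMat p n * y := by
  induction hx using Subring.closure_induction with
  | mem x hx =>
    rcases hx with rfl | ⟨w, rfl⟩
    · exact ⟨sMat p n, sMat_mem, rfl⟩
    · exact ⟨wDiag p n ((fun x : R => WittVector.frobenius x)^[n - 1] w), wDiag_mem _,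
        wDiag_mul_sMat hn w⟩
  | zero => exact ⟨0, zero_mem _, by simp⟩
  | one => exact ⟨1, one_mem _, by simp⟩
  | add a b ha hb iha ihb =>
    obtain ⟨ya, hya, ha'⟩ := iha
    obtain ⟨yb, hyb, hb'⟩ := ihb
    exact ⟨ya + yb, add_mem hya hyb, by rw [add_mul, ha', hb', mul_add]⟩
  | neg a ha iha =>
    obtain ⟨ya, hya, ha'⟩ := iha
    exact ⟨-ya, neg_mem hya, by rw [neg_mul, ha', mul_neg]⟩
  | mul a b ha hb iha ihb =>
    obtain ⟨ya, hya, ha'⟩ := iha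
    obtain ⟨yb, hyb, hb'⟩ := ihb
    exact ⟨ya * yb, mul_mem hya hyb, by
      rw [mul_assoc, hb', ← mul_assoc, ha', mul_assoc]⟩

lemma mul_sMat_pow_comm (hn : n ≠ 0) (j : ℕ) {x : M} (hx : x ∈ Oring p n) :
    ∃ y ∈ Oring p n, x * sMat p n ^ j = sMat p n ^ j * y := by
  induction j with
  | zero => exact ⟨x, hx, by simp⟩
  | succ j ih =>
    obtain ⟨y, hy, hxy⟩ := ih
    obtain ⟨y', hy', hyy'⟩ := mul_sMat_comm hn hy
    exact ⟨y', hy', by rw [pow_succ, ← mul_assoc, hxy, mul_assoc, hyy', mul_assoc]⟩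

/-- `x ∈ S^j · O`. -/
def Imem (j : ℕ) (x : M) : Prop := ∃ z ∈ Oring p n, x = sMat p n ^ j * z

lemma Imem.zero (j : ℕ) : Imem j (0 : M) := ⟨0, zero_mem _, by simp⟩

lemma Imem.add {j : ℕ} {x y : M} (hx : Imem j x) (hy : Imem j y) : Imem j (x + y) := by
  obtain ⟨z, hz, rfl⟩ := hx
  obtain ⟨w, hw, rfl⟩ := hy
  exact ⟨z + w, add_mem hz hw, by rw [mul_add]⟩

lemma Imem.neg {j : ℕ} {x : M} (hx : Imem j x) : Imem j (-x) := by
  obtain ⟨z, hz, rfl⟩ := hx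
  exact ⟨-z, neg_mem hz, by rw [mul_neg]⟩

lemma Imem.mono {a b : ℕ} (hba : b ≤ a) {x : M} (hx : Imem a x) : Imem b x := by
  obtain ⟨z, hz, rfl⟩ := hx
  refine ⟨sMat p n ^ (a - b) * z, mul_mem (pow_mem sMat_mem _) hz, ?_⟩
  rw [← mul_assoc, ← pow_add, Nat.add_sub_cancel' hba]

lemma Imem.mul (hn : n ≠ 0) {a b : ℕ} {x y : M} (hx : Imem a x) (hy : Imem b y) :
    Imem (a + b) (x * y) := by
  obtain ⟨z, hz, rfl⟩ := hx
  obtain ⟨w, hw, rfl⟩ := hy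
  obtain ⟨z', hz', hzz'⟩ := mul_sMat_pow_comm hn b hz
  refine ⟨z' * w, mul_mem hz' hw, ?_⟩
  rw [mul_assoc, ← mul_assoc z, hzz', pow_add]
  noncomm_ring

lemma Imem.mul_right {a : ℕ} {x c : M} (hc : c ∈ Oring p n) (hx : Imem a x) :
    Imem a (x * c) := by
  obtain ⟨z, hz, rfl⟩ := hx
  exact ⟨z * c, mul_mem hz hc, by rw [mul_assoc]⟩

lemma Imem.zsmul {j : ℕ} {x : M} (hx : Imem j x) (a : ℤ) : Imem j (a • x) := by
  obtain ⟨z, hz, rfl⟩ := hx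
  exact ⟨a • z, zsmul_mem hz a, (mul_smul_comm a _ z).symm⟩

lemma Imem.pow (hn : n ≠ 0) {j : ℕ} {y : M} (hy : Imem j y) :
    ∀ i, 1 ≤ i → Imem (i * j) (y ^ i) := by
  intro i
  induction i with
  | zero => omega
  | succ i ih =>
    intro _
    rcases Nat.eq_or_lt_of_le (Nat.one_le_iff_ne_zero.mpr (Nat.succ_ne_zero i)) with h | h
    · obtain rfl : i = 0 := by omega
      rw [(show (0 + 1) * j = j by ring), pow_one]
      exact hy
    · have hi : 1 ≤ i := by omega
      rw [pow_succ, (show (i + 1) * j = i * j + j by ring)]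
      exact (ih hi).mul hn hy

lemma sMat_pow_n_cast (hn : n ≠ 0) : sMat p n ^ n = ((p : ℕ) : M) := by
  rw [sMat_pow_n hn, Nat.cast_smul_eq_nsmul, nsmul_eq_mul, mul_one]

lemma Imem.mul_p (hn : n ≠ 0) {a : ℕ} {x : M} (hx : Imem a x) :
    Imem (a + n) (x * ((p : ℕ) : M)) := by
  obtain ⟨z, hz, rfl⟩ := hx
  refine ⟨z, hz, ?_⟩
  rw [mul_assoc, ← (Nat.cast_commute (p : ℕ) z).eq, ← sMat_pow_n_cast hn,
    ← mul_assoc, ← pow_add, Nat.add_comm a n]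

lemma Imem.mul_p_pow (hn : n ≠ 0) {a : ℕ} {x : M} (hx : Imem a x) (c : ℕ) :
    Imem (a + n * c) (x * ((p ^ c : ℕ) : M)) := by
  induction c with
  | zero => simpa using hx
  | succ c ih =>
    have := ih.mul_p hn
    rw [pow_succ, Nat.cast_mul, ← mul_assoc] at *
    rw [Nat.mul_succ, ← Nat.add_assoc]
    exact this

lemma pSmul_cancel (hn : n ≠ 0) {a b : M}
    (h : sMat p n ^ n * a = sMat p n ^ n * b) : a = b := by
  rw [sMat_pow_n hn, smul_mul_assoc, smul_mul_assoc, one_mul, one_mul] at h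
  funext i l
  have h2 : ((p : R) • a) i l = ((p : R) • b) i l := by rw [h]
  rw [Matrix.smul_apply, Matrix.smul_apply, smul_eq_mul, smul_eq_mul] at h2
  exact mul_left_cancel₀ (WittVector.p_nonzero p _) h2

lemma wv_forall_pow_dvd {a : R} (h : ∀ c, (p : R) ^ c ∣ a) : a = 0 := by
  by_contra ha
  obtain ⟨m, u, hu⟩ := WittVector.exists_eq_pow_p_mul' a ha
  obtain ⟨d, hd⟩ := h (m + 1)
  rw [hu, pow_succ, mul_assoc] at hd
  have : (u : R) = (p : R) * d := mul_left_cancel₀ (pow_ne_zero m (WittVector.p_nonzero p _)) hd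
  exact (WittVector.irreducible p).not_isUnit (isUnit_of_dvd_unit ⟨d, this⟩ u.isUnit)

lemma Imem.eq_zero (hn : n ≠ 0) {y : M} (h : ∀ j, Imem j y) : y = 0 := by
  funext i l
  rw [Matrix.zero_apply]
  apply wv_forall_pow_dvd
  intro c
  obtain ⟨z, hz, hy⟩ := h (n * c)
  have hS : sMat p n ^ (n * c) = ((p : R) ^ c) • (1 : M) := by
    rw [pow_mul, sMat_pow_n hn, smul_pow, one_pow]
  rw [hS, smul_mul_assoc, one_mul] at hy
  exact ⟨z i l, by rw [hy, Matrix.smul_apply, smul_eq_mul]⟩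

lemma Imem.sum {ι : Type*} {s : Finset ι} {f : ι → M} {j : ℕ}
    (h : ∀ i ∈ s, Imem j (f i)) : Imem j (∑ i ∈ s, f i) := by
  classical
  induction s using Finset.induction_on with
  | empty => simpa using Imem.zero j
  | @insert a s ha ih =>
    rw [Finset.sum_insert ha]
    exact (h _ (Finset.mem_insert_self a s)).add
      (ih fun i hi => h i (Finset.mem_insert_of_mem hi))

lemma key_eq {y : M} {q : ℕ} (hq : 2 ≤ q) (h : (1 + y) ^ q = 1) :
    y * ((q : ℕ) : M)
      = -∑ m ∈ Finset.range (q - 1), y ^ (m + 1 + 1) * ((q.choose (m + 1 + 1) : ℕ) : M) := by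
  have hb : (1 + y) ^ q = ∑ m ∈ Finset.range (q + 1), y ^ m * ((q.choose m : ℕ) : M) := by
    rw [add_comm, Commute.add_pow (Commute.one_right y)]
    simp only [one_pow, mul_one]
  rw [hb, (show q + 1 = (q - 1) + 1 + 1 by omega), Finset.sum_range_succ',
    Finset.sum_range_succ'] at h
  simp only [pow_zero, pow_one, one_mul, zero_add, Nat.choose_zero_right,
    Nat.choose_one_right, Nat.cast_one, mul_one, add_eq_right] at h
  exact eq_neg_of_add_eq_zero_right h

lemma descent (hn : n ≠ 0) {j : ℕ} (hj1 : 1 ≤ j) (hjp : n < j * (p - 1)) {y : M}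
    (hy : Imem j y) {q : ℕ} (hq : q.Prime) (hord : (1 + y) ^ q = 1) :
    Imem (j + 1) y := by
  have hqe := key_eq hq.two_le hord
  have hmul : j * p = j * (p - 1) + j := by
    have h1 : p - 1 + 1 = p := by
      have := (Fact.out : p.Prime).two_le; omega
    calc j * p = j * ((p - 1) + 1) := by rw [h1]
    _ = j * (p - 1) + j := by ring
  by_cases hqp : q = p
  · have hjq : n < j * (q - 1) := by rw [hqp]; exact hjp
    have hmulq : j * q = j * (q - 1) + j := by rw [hqp]; exact hmul
    have hcast : ((q : ℕ) : M) = ((p : ℕ) : M) := by rw [hqp]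
    have hterm : ∀ m ∈ Finset.range (q - 1),
        Imem (n + (j + 1)) (y ^ (m + 1 + 1) * ((q.choose (m + 1 + 1) : ℕ) : M)) := by
      intro m hm
      rw [Finset.mem_range] at hm
      rcases eq_or_ne (m + 1 + 1) q with he | hne
      · refine ((hy.pow hn (m + 1 + 1) (by omega)).mono ?_).mul_right (natCast_mem _ _)
        calc n + (j + 1) ≤ j * (q - 1) + j := by omega
        _ = j * q := hmulq.symm
        _ = (m + 1 + 1) * j := by rw [he, mul_comm]
      · have hdvd : q ∣ q.choose (m + 1 + 1) := hq.dvd_choose_self (by omega) (by omega)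
        obtain ⟨d, hd⟩ := hdvd
        rw [hd, Nat.cast_mul, ← mul_assoc, hcast]
        have h1 : Imem (2 * j) (y ^ (m + 1 + 1)) :=
          (hy.pow hn (m + 1 + 1) (by omega)).mono (Nat.mul_le_mul_right j (by omega))
        exact ((h1.mul_p hn).mul_right (natCast_mem _ d)).mono (by omega)
    have hsum : Imem (n + (j + 1)) (y * ((q : ℕ) : M)) := by
      rw [hqe]; exact (Imem.sum hterm).neg
    obtain ⟨z, hz, hzeq⟩ := hsum
    refine ⟨z, hz, pSmul_cancel hn ?_⟩
    calc sMat p n ^ n * y = ((q : ℕ) : M) * y := by rw [hcast, sMat_pow_n_cast hn]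
    _ = y * ((q : ℕ) : M) := (Nat.cast_commute (q : ℕ) y).eq
    _ = sMat p n ^ (n + (j + 1)) * z := hzeq
    _ = sMat p n ^ n * (sMat p n ^ (j + 1) * z) := by rw [← mul_assoc, ← pow_add]
  · have hterm : ∀ m ∈ Finset.range (q - 1),
        Imem (2 * j) (y ^ (m + 1 + 1) * ((q.choose (m + 1 + 1) : ℕ) : M)) := by
      intro m hm
      exact ((hy.pow hn (m + 1 + 1) (by omega)).mono
        (Nat.mul_le_mul_right j (by omega))).mul_right (natCast_mem _ _)
    have hq2 : Imem (2 * j) (y * ((q : ℕ) : M)) := by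
      rw [hqe]; exact (Imem.sum hterm).neg
    have hco : IsCoprime (q : ℤ) ((p : ℤ) ^ j) := by
      refine IsCoprime.pow_right ?_
      rw [Nat.isCoprime_iff_coprime]
      exact (Nat.coprime_primes hq (Fact.out : p.Prime)).mpr hqp
    obtain ⟨a, b, hab⟩ := hco
    have h1 : Imem (2 * j) ((q : ℤ) • y) := by
      have he : (q : ℤ) • y = y * ((q : ℕ) : M) := by
        rw [natCast_zsmul, nsmul_eq_mul, (Nat.cast_commute (q : ℕ) y).eq]
      rw [he]; exact hq2
    have h2 : Imem (2 * j) (((p : ℤ) ^ j) • y) := by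
      have he : ((p : ℤ) ^ j) • y = y * ((p ^ j : ℕ) : M) := by
        rw [(show ((p : ℤ) ^ j) = ((p ^ j : ℕ) : ℤ) by push_cast; ring), natCast_zsmul,
          nsmul_eq_mul, (Nat.cast_commute _ y).eq]
      rw [he]
      have hnj : j ≤ n * j := Nat.le_mul_of_pos_left j (by omega)
      exact (hy.mul_p_pow hn j).mono (by omega)
    have hy2 : Imem (2 * j) y := by
      have he : y = a • ((q : ℤ) • y) + b • (((p : ℤ) ^ j) • y) := by
        rw [smul_smul, smul_smul, ← add_smul, hab, one_smul]
      rw [he]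
      exact (h1.zsmul a).add (h2.zsmul b)
    exact hy2.mono (by omega)

lemma prime_order_eq_zero (hn : n ≠ 0) {k : ℕ} (hk : n < k * (p - 1)) {y : M}
    (hy : Imem k y) {q : ℕ} (hq : q.Prime) (hord : (1 + y) ^ q = 1) : y = 0 := by
  have hk1 : 1 ≤ k := by
    rcases Nat.eq_zero_or_pos k with rfl | h
    · simp at hk
    · exact h
  have hall : ∀ j, k ≤ j → Imem j y := by
    intro j hj
    induction j, hj using Nat.le_induction with
    | base => exact hy
    | succ j hj ih =>
      exact descent hn (le_trans hk1 hj) (lt_of_lt_of_le hk (Nat.mul_le_mul_right _ hj))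
        ih hq hord
  apply Imem.eq_zero hn
  intro j
  rcases le_or_gt k j with h | h
  · exact hall j h
  · exact (hall k le_rfl).mono (le_of_lt h)

lemma pow_sub_one_mem (hn : n ≠ 0) {k : ℕ} {y : M} (hy : Imem k y) (t : ℕ) :
    Imem k ((1 + y) ^ t - 1) := by
  induction t with
  | zero => simpa using Imem.zero k
  | succ t ih =>
    have he : (1 + y) ^ (t + 1) - 1
        = ((1 + y) ^ t - 1) + ((1 + y) ^ t - 1) * y + y := by
      rw [pow_succ]; noncomm_ring
    rw [he]
    exact ((ih.add ((ih.mul hn hy).mono (Nat.le_add_right k k))).add hy)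

end Aux

/-- Torsion elements deep in the filtration of the strict Morava stabilizer group are
trivial: if `x ∈ O_n` satisfies `x ≡ 1 mod S^k` where `k/n = i > 1/(p-1)` (i.e.
`k·(p-1) > n`), and `x` has finite order, then `x = 1`. -/
theorem torsion_free_deep_filtration (p n k : ℕ) [Fact p.Prime] (hn : 0 < n)
    (hi : n < k * (p - 1))
    (x : Matrix (Fin n) (Fin n) (WittVector p (GaloisField p n)))
    (hx : x ∈ Oring p n)
    (hcong : ∃ z ∈ Oring p n, x - 1 = sMat p n ^ k * z)
    (htors : ∃ m : ℕ, 0 < m ∧ x ^ m = 1) :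
    x = 1 := by
  have hn' : n ≠ 0 := hn.ne'
  obtain ⟨z, hz, hxz⟩ := hcong
  have hyI : Imem k (x - 1) := ⟨z, hz, hxz⟩
  have hx1 : x = 1 + (x - 1) := by noncomm_ring
  obtain ⟨m, hm, hxm⟩ := htors
  suffices h : ∀ m, 0 < m → ∀ y : Matrix (Fin n) (Fin n) (WittVector p (GaloisField p n)),
      Imem k y → (1 + y) ^ m = 1 → y = 0 by
    have h0 := h m hm (x - 1) hyI (by rw [← hx1]; exact hxm)
    rw [hx1, h0, add_zero]
  intro m
  induction m using Nat.strong_induction_on with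
  | _ m ih =>
    intro hm y hyk hord
    rcases eq_or_ne m 1 with rfl | hm1
    · rw [pow_one, add_eq_left] at hord
      exact hord
    · have hqp : m.minFac.Prime := Nat.minFac_prime hm1
      have hdvd : m.minFac ∣ m := Nat.minFac_dvd m
      have hlt : m / m.minFac < m := Nat.div_lt_self hm hqp.one_lt
      have hpos : 0 < m / m.minFac := Nat.div_pos (Nat.minFac_le hm) hqp.pos
      have hy' : Imem k ((1 + y) ^ (m / m.minFac) - 1) := pow_sub_one_mem hn' hyk _
      have h1y' : 1 + ((1 + y) ^ (m / m.minFac) - 1) = (1 + y) ^ (m / m.minFac) := by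
        noncomm_ring
      have hord' : (1 + ((1 + y) ^ (m / m.minFac) - 1)) ^ m.minFac = 1 := by
        rw [h1y', ← pow_mul, Nat.div_mul_cancel hdvd]
        exact hord
      have hz0 : (1 + y) ^ (m / m.minFac) - 1 = 0 :=
        prime_order_eq_zero hn' hi hy' hqp hord'
      have hpow1 : (1 + y) ^ (m / m.minFac) = 1 := by
        rw [← h1y', hz0, add_zero]
      exact ih (m / m.minFac) hlt hpos y hyk hpow1
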